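/- Assume $Y$ is supported in $B(0,R)$, $X_1 = Y + \sigma\Xi$ with independent $\Xi \sim \mathcal N(0,I_d)$, $X_0 \sim \mathcal N(0,I_d)$ independent of $X_1$, and $u(t,x) = -\frac{x}{1-t} + \frac{1}{1-t}\mathbb E[X_1|X_t=x]$ where $X_t = tX_1 + (1-t)X_0$. Then for every $t \in (0,1)$ and $x \in \mathbb R^d$, $\|u(t,x)\|_2 \le B(1 + \|x\|_2)$ for a constant $B$ depending only on $\sigma$ and $R$ (uniform in $t$). -/

import Mathlib

open MeasureTheory

open Real

/-- Density of `N(0, v I_d)` on `ℝ^d`. -/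
noncomputable def gaussD (d : ℕ) (v : ℝ) (x : EuclideanSpace ℝ (Fin d)) : ℝ :=
  (2 * Real.pi * v) ^ (-(d : ℝ) / 2) * Real.exp (-‖x‖ ^ 2 / (2 * v))

variable {d : ℕ} {v : ℝ}

lemma gaussD_pos (hv : 0 < v) (x : EuclideanSpace ℝ (Fin d)) : 0 < gaussD d v x := by
  unfold gaussD; positivity

lemma gaussD_nonneg (hv : 0 < v) (x : EuclideanSpace ℝ (Fin d)) : 0 ≤ gaussD d v x :=
  (gaussD_pos hv x).le

lemma gaussD_eq (hv : 0 < v) (x : EuclideanSpace ℝ (Fin d)) :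
    gaussD d v x = (2 * Real.pi * v) ^ (-(d : ℝ) / 2) * Real.exp (-(2*v)⁻¹ * ‖x‖ ^ 2) := by
  rw [gaussD]; ring_nf

lemma integral_gaussD (hv : 0 < v) : ∫ z : EuclideanSpace ℝ (Fin d), gaussD d v z = 1 := by
  have h2v : (0:ℝ) < (2*v)⁻¹ := by positivity
  simp_rw [gaussD_eq hv, integral_const_mul]
  rw [GaussianFourier.integral_rexp_neg_mul_sq_norm h2v, finrank_euclideanSpace_fin]
  have : π / (2*v)⁻¹ = 2 * π * v := by field_simp
  rw [this, ← Real.rpow_add (by positivity)]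
  have h0 : (-(d:ℝ)/2 + (d:ℝ)/2 : ℝ) = 0 := by ring
  rw [h0, Real.rpow_zero]

lemma continuous_gaussD : Continuous (gaussD d v) := by
  unfold gaussD; fun_prop

lemma integrable_rexp_neg_norm_sq (b : ℝ) (hb : 0 < b) :
    Integrable (fun z : EuclideanSpace ℝ (Fin d) => rexp (-b * ‖z‖^2)) := by
  have h := GaussianFourier.integrable_cexp_neg_mul_sq_norm_add
    (V := EuclideanSpace ℝ (Fin d)) (b := (b:ℂ)) (by simpa using hb) 0 0
  have := h.re
  simpa [← Complex.ofReal_pow, ← Complex.ofReal_mul, ← Complex.ofReal_neg,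
    Complex.exp_ofReal_re] using this

lemma integrable_gaussD (hv : 0 < v) : Integrable (gaussD d v) := by
  have h2v : (0:ℝ) < (2*v)⁻¹ := by positivity
  have he : gaussD d v = fun x => (2 * Real.pi * v) ^ (-(d : ℝ) / 2) * Real.exp (-(2*v)⁻¹ * ‖x‖ ^ 2) := funext fun x => gaussD_eq hv x
  rw [he]
  exact (integrable_rexp_neg_norm_sq _ h2v).const_mul _


lemma rexp_norm_mul_le (b r : ℝ) (hb : 0 < b) (hr : 0 ≤ r) :
    rexp (-b * r^2) * r ≤ (1 + 2/b) * rexp (-(b/2) * r^2) := by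
  have h1 : r ≤ 1 + r^2 := by nlinarith [sq_nonneg (r - 1)]
  have he := Real.add_one_le_exp ((b/2) * r^2)
  have hb2 : (0:ℝ) < 2/b := by positivity
  have hkey : (2/b) * ((b/2)*r^2 + 1) = r^2 + 2/b := by field_simp
  have h2 : r^2 ≤ (2/b) * rexp ((b/2) * r^2) := by
    have := mul_le_mul_of_nonneg_left he (by positivity : (0:ℝ) ≤ 2/b)
    linarith [this, hkey ▸ this]
  have h3 : rexp (-b * r^2) ≤ rexp (-(b/2) * r^2) := by
    apply Real.exp_le_exp.2; nlinarith
  have hmul : rexp (-b*r^2) * rexp ((b/2)*r^2) = rexp (-(b/2)*r^2) := by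
    rw [← Real.exp_add]; ring_nf
  calc rexp (-b * r^2) * r ≤ rexp (-b * r^2) * (1 + r^2) :=
        mul_le_mul_of_nonneg_left h1 (Real.exp_pos _).le
    _ = rexp (-b * r^2) + rexp (-b * r^2) * r^2 := by ring
    _ ≤ rexp (-(b/2) * r^2) + rexp (-b*r^2) * ((2/b) * rexp ((b/2) * r^2)) :=
        add_le_add h3 (mul_le_mul_of_nonneg_left h2 (Real.exp_pos _).le)
    _ = rexp (-(b/2) * r^2) + (2/b) * rexp (-(b/2) * r^2) := by
        linear_combination (2/b) * hmul
    _ = (1 + 2/b) * rexp (-(b/2) * r^2) := by ring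

lemma integrable_rexp_neg_norm_sq_mul_norm (b : ℝ) (hb : 0 < b) :
    Integrable (fun z : EuclideanSpace ℝ (Fin d) => rexp (-b * ‖z‖^2) * ‖z‖) := by
  apply Integrable.mono' (((integrable_rexp_neg_norm_sq (d := d) (b/2) (by positivity)).const_mul
    (1 + 2/b)))
  · exact (Continuous.mul (by fun_prop) continuous_norm).aestronglyMeasurable
  · filter_upwards with z
    rw [Real.norm_eq_abs, abs_of_nonneg (by positivity)]
    exact rexp_norm_mul_le b ‖z‖ hb (norm_nonneg z)

lemma integrable_gaussD_smul (hv : 0 < v) :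
    Integrable (fun z : EuclideanSpace ℝ (Fin d) => gaussD d v z • z) := by
  have h2v : (0:ℝ) < (2*v)⁻¹ := by positivity
  apply Integrable.mono' (((integrable_rexp_neg_norm_sq_mul_norm (d := d) _ h2v).const_mul
    ((2 * Real.pi * v) ^ (-(d : ℝ) / 2))))
  · exact (continuous_gaussD.smul continuous_id).aestronglyMeasurable
  · filter_upwards with z
    rw [norm_smul, Real.norm_eq_abs, abs_of_nonneg (gaussD_nonneg hv z), gaussD_eq hv]
    ring_nf
    exact le_refl _

lemma integral_gaussD_smul_self (hv : 0 < v) :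
    ∫ z : EuclideanSpace ℝ (Fin d), gaussD d v z • z = 0 := by
  set I := ∫ z : EuclideanSpace ℝ (Fin d), gaussD d v z • z with hI
  have hneg := integral_neg_eq_self (fun z : EuclideanSpace ℝ (Fin d) => gaussD d v z • z) volume
  have heven : ∀ z : EuclideanSpace ℝ (Fin d),
      gaussD d v (-z) • (-z) = -(gaussD d v z • z) := by
    intro z; rw [smul_neg]; congr 2; unfold gaussD; rw [norm_neg]
  simp_rw [heven, integral_neg] at hneg
  have h2 : (2:ℝ) • I = 0 := by
    rw [two_smul]
    rw [← hI] at hneg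
    rw [← neg_eq_iff_add_eq_zero] at *
    exact hneg
  exact (smul_eq_zero.mp h2).resolve_left (by norm_num)

lemma integral_gaussD_sub (hv : 0 < v) (m : EuclideanSpace ℝ (Fin d)) :
    ∫ x : EuclideanSpace ℝ (Fin d), gaussD d v (x - m) = 1 := by
  rw [← integral_gaussD (d := d) hv]
  exact integral_sub_right_eq_self (gaussD d v) m

lemma integrable_gaussD_sub (hv : 0 < v) (m : EuclideanSpace ℝ (Fin d)) :
    Integrable (fun x : EuclideanSpace ℝ (Fin d) => gaussD d v (x - m)) :=
  (integrable_gaussD hv).comp_sub_right m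

lemma integrable_gaussD_sub_smul (hv : 0 < v) (m : EuclideanSpace ℝ (Fin d)) :
    Integrable (fun x : EuclideanSpace ℝ (Fin d) => gaussD d v (x - m) • x) := by
  have h := ((integrable_gaussD_smul (d := d) hv).add
    ((integrable_gaussD hv).smul_const m)).comp_sub_right m
  refine h.congr (Filter.Eventually.of_forall fun x => ?_)
  simp only [Pi.add_apply]
  rw [← smul_add, sub_add_cancel]

lemma integral_gaussD_sub_smul (hv : 0 < v) (m : EuclideanSpace ℝ (Fin d)) :
    ∫ x : EuclideanSpace ℝ (Fin d), gaussD d v (x - m) • x = m := by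
  have h := integral_add_right_eq_self (μ := (volume : Measure (EuclideanSpace ℝ (Fin d))))
    (fun x : EuclideanSpace ℝ (Fin d) => gaussD d v (x - m) • x) m
  rw [← h]
  simp only [add_sub_cancel_right]
  have : ∀ z : EuclideanSpace ℝ (Fin d), gaussD d v z • (z + m)
      = gaussD d v z • z + gaussD d v z • m := fun z => smul_add _ _ _
  simp_rw [this]
  rw [integral_add (integrable_gaussD_smul hv) ((integrable_gaussD hv).smul_const m),
    integral_gaussD_smul_self hv, integral_smul_const, integral_gaussD hv, zero_add, one_smul]

notation "⟪" x ", " y "⟫" => @inner ℝ _ _ x y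

lemma sq_norm_smul' (t : ℝ) (a : EuclideanSpace ℝ (Fin d)) : ‖t • a‖^2 = t^2 * ‖a‖^2 := by
  rw [norm_smul]; simp [mul_pow, sq_abs]

lemma complete_square {v1 v2 w : ℝ} (hv1 : v1 ≠ 0) (hv2 : v2 ≠ 0) (hw : w ≠ 0) (t : ℝ)
    (hquad : t^2/v1 + 1/v2 = 1/w) (x y x1 m : EuclideanSpace ℝ (Fin d))
    (hm : ⟪x1, m⟫ = (w*t/v1) * ⟪x1, x⟫ + (w/v2) * ⟪x1, y⟫) :
    ‖x - t•x1‖^2/v1 + ‖x1-y‖^2/v2 = ‖x1 - m‖^2/w + (‖x‖^2/v1 + ‖y‖^2/v2 - ‖m‖^2/w) := by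
  have e1 : ‖x - t•x1‖^2 = ‖x‖^2 - 2*(t*⟪x1, x⟫) + t^2*‖x1‖^2 := by
    rw [norm_sub_sq_real, real_inner_smul_right, real_inner_comm, sq_norm_smul']
  have e2 : ‖x1 - y‖^2 = ‖x1‖^2 - 2*⟪x1, y⟫ + ‖y‖^2 := by
    rw [norm_sub_sq_real]
  have e3 : ‖x1 - m‖^2 = ‖x1‖^2 - 2*⟪x1, m⟫ + ‖m‖^2 := by
    rw [norm_sub_sq_real]
  rw [e1, e2, e3, hm]
  have hq : v2*w*t^2 + v1*w = v1*v2 := by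
    field_simp at hquad; linarith
  field_simp
  linear_combination ‖x1‖^2 * hq


lemma gaussD_mul {v1 v2 w : ℝ} (hv1 : 0 < v1) (hv2 : 0 < v2) (hw : 0 < w) (t : ℝ)
    (hquad : t^2/v1 + 1/v2 = 1/w) (x y x1 m : EuclideanSpace ℝ (Fin d))
    (hm : m = (w*t/v1) • x + (w/v2) • y) :
    gaussD d v1 (x - t•x1) * gaussD d v2 (x1 - y)
      = ((2*Real.pi*v1)^(-(d:ℝ)/2) * (2*Real.pi*v2)^(-(d:ℝ)/2) * (2*Real.pi*w)^((d:ℝ)/2)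
         * rexp (-(‖x‖^2/v1 + ‖y‖^2/v2 - ‖m‖^2/w)/2)) * gaussD d w (x1 - m) := by
  have hminner : ⟪x1, m⟫ = (w*t/v1) * ⟪x1, x⟫ + (w/v2) * ⟪x1, y⟫ := by
    rw [hm, inner_add_right, real_inner_smul_right, real_inner_smul_right]
  have hexp := complete_square hv1.ne' hv2.ne' hw.ne' t hquad x y x1 m hminner
  unfold gaussD
  have hWW : (2*Real.pi*w)^((d:ℝ)/2) * (2*Real.pi*w)^(-(d:ℝ)/2) = 1 := by
    rw [← Real.rpow_add (by positivity)]
    have : ((d:ℝ)/2 + -(d:ℝ)/2 : ℝ) = 0 := by ring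
    rw [this, Real.rpow_zero]
  have hee : rexp (-‖x - t•x1‖^2/(2*v1)) * rexp (-‖x1-y‖^2/(2*v2))
      = rexp (-(‖x‖^2/v1 + ‖y‖^2/v2 - ‖m‖^2/w)/2) * rexp (-‖x1-m‖^2/(2*w)) := by
    rw [← Real.exp_add, ← Real.exp_add]
    congr 1
    linear_combination (-1/2 : ℝ) * hexp
  calc (2*Real.pi*v1)^(-(d:ℝ)/2) * rexp (-‖x - t•x1‖^2/(2*v1))
        * ((2*Real.pi*v2)^(-(d:ℝ)/2) * rexp (-‖x1-y‖^2/(2*v2)))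
      = (2*Real.pi*v1)^(-(d:ℝ)/2) * (2*Real.pi*v2)^(-(d:ℝ)/2)
        * (rexp (-‖x - t•x1‖^2/(2*v1)) * rexp (-‖x1-y‖^2/(2*v2))) := by ring
    _ = (2*Real.pi*v1)^(-(d:ℝ)/2) * (2*Real.pi*v2)^(-(d:ℝ)/2)
        * (((2*Real.pi*w)^((d:ℝ)/2) * (2*Real.pi*w)^(-(d:ℝ)/2))
          * (rexp (-(‖x‖^2/v1 + ‖y‖^2/v2 - ‖m‖^2/w)/2) * rexp (-‖x1-m‖^2/(2*w)))) := by
        rw [hee, hWW]; ring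
    _ = ((2*Real.pi*v1)^(-(d:ℝ)/2) * (2*Real.pi*v2)^(-(d:ℝ)/2) * (2*Real.pi*w)^((d:ℝ)/2)
         * rexp (-(‖x‖^2/v1 + ‖y‖^2/v2 - ‖m‖^2/w)/2))
        * ((2*Real.pi*w)^(-(d:ℝ)/2) * rexp (-‖x1-m‖^2/(2*w))) := by ring

lemma integrable_gaussD_norm (hv : 0 < v) :
    Integrable (fun z : EuclideanSpace ℝ (Fin d) => gaussD d v z * ‖z‖) := by
  refine (integrable_gaussD_smul hv).norm.congr (Filter.Eventually.of_forall fun z => ?_)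
  show ‖gaussD d v z • z‖ = _
  rw [norm_smul, Real.norm_eq_abs, abs_of_nonneg (gaussD_nonneg hv z)]

lemma integral_gaussD_sub_norm_le (hv : 0 < v) (m : EuclideanSpace ℝ (Fin d)) :
    ∫ x1, gaussD d v (x1 - m) * ‖x1‖
      ≤ (∫ z : EuclideanSpace ℝ (Fin d), gaussD d v z * ‖z‖) + ‖m‖ := by
  have htrans := integral_add_right_eq_self (μ := (volume : Measure (EuclideanSpace ℝ (Fin d))))
    (fun x1 => gaussD d v (x1 - m) * ‖x1‖) m
  simp only [add_sub_cancel_right] at htrans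
  rw [← htrans]
  have hiR : Integrable (fun z : EuclideanSpace ℝ (Fin d) =>
      gaussD d v z * ‖z‖ + gaussD d v z * ‖m‖) :=
    (integrable_gaussD_norm hv).add ((integrable_gaussD hv).mul_const ‖m‖)
  have hiL : Integrable (fun z : EuclideanSpace ℝ (Fin d) => gaussD d v z * ‖z + m‖) := by
    apply hiR.mono' (by
      exact ((continuous_gaussD.mul ((continuous_id.add continuous_const).norm)).aestronglyMeasurable))
    filter_upwards with z
    rw [Real.norm_eq_abs, abs_of_nonneg (mul_nonneg (gaussD_nonneg hv z) (norm_nonneg _))]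
    calc gaussD d v z * ‖z + m‖ ≤ gaussD d v z * (‖z‖ + ‖m‖) :=
          mul_le_mul_of_nonneg_left (norm_add_le z m) (gaussD_nonneg hv z)
      _ = gaussD d v z * ‖z‖ + gaussD d v z * ‖m‖ := by ring
  calc ∫ z, gaussD d v z * ‖z + m‖
      ≤ ∫ z : EuclideanSpace ℝ (Fin d), (gaussD d v z * ‖z‖ + gaussD d v z * ‖m‖) := by
        apply integral_mono hiL hiR
        intro z
        calc gaussD d v z * ‖z + m‖ ≤ gaussD d v z * (‖z‖ + ‖m‖) :=
              mul_le_mul_of_nonneg_left (norm_add_le z m) (gaussD_nonneg hv z)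
          _ = gaussD d v z * ‖z‖ + gaussD d v z * ‖m‖ := by ring
    _ = (∫ z : EuclideanSpace ℝ (Fin d), gaussD d v z * ‖z‖) + ‖m‖ := by
        rw [integral_add (integrable_gaussD_norm hv) ((integrable_gaussD hv).mul_const ‖m‖),
          integral_mul_const, integral_gaussD hv, one_mul]

section Fubini
variable {w : ℝ} {pY C : EuclideanSpace ℝ (Fin d) → ℝ}
  {m : EuclideanSpace ℝ (Fin d) → EuclideanSpace ℝ (Fin d)} {M ρ : ℝ}

lemma aesm_F (hw : 0 < w) (hpYm : Measurable pY) (hCc : Continuous C) (hmc : Continuous m) :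
    AEStronglyMeasurable
      (fun p : EuclideanSpace ℝ (Fin d) × EuclideanSpace ℝ (Fin d) =>
        C p.2 * gaussD d w (p.1 - m p.2) * pY p.2) (volume.prod volume) :=
  (((hCc.comp continuous_snd).mul
      (continuous_gaussD.comp (continuous_fst.sub (hmc.comp continuous_snd)))).aestronglyMeasurable.mul
    ((hpYm.comp measurable_snd).aestronglyMeasurable))

lemma integrable_pYC (hw : 0 < w) (hpYm : Measurable pY) (hpY0 : ∀ y, 0 ≤ pY y)
    (hpYint : Integrable pY) (hCc : Continuous C) (hC0 : ∀ y, 0 ≤ C y)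
    (hM : ∀ y, pY y ≠ 0 → C y ≤ M) :
    Integrable (fun y => pY y * C y) := by
  apply (hpYint.mul_const M).mono'
    (hpYm.aestronglyMeasurable.mul hCc.aestronglyMeasurable)
  filter_upwards with y
  show |pY y * C y| ≤ pY y * M
  rw [abs_of_nonneg (mul_nonneg (hpY0 y) (hC0 y))]
  by_cases h : pY y = 0
  · simp [h]
  · exact mul_le_mul_of_nonneg_left (hM y h) (hpY0 y)

lemma integrable_F (hw : 0 < w) (hpYm : Measurable pY) (hpY0 : ∀ y, 0 ≤ pY y)
    (hpYint : Integrable pY) (hCc : Continuous C) (hC0 : ∀ y, 0 ≤ C y) (hmc : Continuous m)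
    (hM : ∀ y, pY y ≠ 0 → C y ≤ M) :
    Integrable (fun p : EuclideanSpace ℝ (Fin d) × EuclideanSpace ℝ (Fin d) =>
      C p.2 * gaussD d w (p.1 - m p.2) * pY p.2) (volume.prod volume) := by
  rw [integrable_prod_iff' (aesm_F hw hpYm hCc hmc)]
  constructor
  · filter_upwards with y
    exact ((integrable_gaussD_sub hw (m y)).const_mul (C y)).mul_const (pY y)
  · have hfun : (fun y => ∫ x1, ‖C y * gaussD d w (x1 - m y) * pY y‖)
        = fun y => pY y * C y := by
      funext y
      have h1 : ∀ x1 : EuclideanSpace ℝ (Fin d),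
          ‖C y * gaussD d w (x1 - m y) * pY y‖
            = (C y * pY y) * gaussD d w (x1 - m y) := by
        intro x1
        rw [Real.norm_eq_abs, abs_of_nonneg
          (mul_nonneg (mul_nonneg (hC0 y) (gaussD_nonneg hw _)) (hpY0 y))]
        ring
      simp_rw [h1]
      rw [integral_const_mul, integral_gaussD_sub hw, mul_one, mul_comm]
    rw [hfun]
    exact integrable_pYC hw hpYm hpY0 hpYint hCc hC0 hM

lemma fubini_scalar (hw : 0 < w) (hpYm : Measurable pY) (hpY0 : ∀ y, 0 ≤ pY y)
    (hpYint : Integrable pY) (hCc : Continuous C) (hC0 : ∀ y, 0 ≤ C y) (hmc : Continuous m)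
    (hM : ∀ y, pY y ≠ 0 → C y ≤ M) :
    ∫ x1, ∫ y, C y * gaussD d w (x1 - m y) * pY y = ∫ y, pY y * C y := by
  rw [integral_integral_swap (integrable_F hw hpYm hpY0 hpYint hCc hC0 hmc hM)]
  congr 1
  funext y
  have h1 : (fun x1 => C y * gaussD d w (x1 - m y) * pY y)
      = fun x1 => (C y * pY y) * gaussD d w (x1 - m y) := by funext x1; ring
  rw [h1, integral_const_mul, integral_gaussD_sub hw, mul_one, mul_comm]

lemma integrable_G (hw : 0 < w) (hpYm : Measurable pY) (hpY0 : ∀ y, 0 ≤ pY y)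
    (hpYint : Integrable pY) (hCc : Continuous C) (hC0 : ∀ y, 0 ≤ C y) (hmc : Continuous m)
    (hM : ∀ y, pY y ≠ 0 → C y ≤ M) (hρ : ∀ y, pY y ≠ 0 → ‖m y‖ ≤ ρ) (hMp : 0 ≤ M) :
    Integrable (fun p : EuclideanSpace ℝ (Fin d) × EuclideanSpace ℝ (Fin d) =>
      (C p.2 * gaussD d w (p.1 - m p.2) * pY p.2) • p.1) (volume.prod volume) := by
  set K : ℝ := ∫ z : EuclideanSpace ℝ (Fin d), gaussD d w z * ‖z‖ with hK
  have hK0 : 0 ≤ K := integral_nonneg fun z => mul_nonneg (gaussD_nonneg hw z) (norm_nonneg z)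
  have hGm : AEStronglyMeasurable
      (fun p : EuclideanSpace ℝ (Fin d) × EuclideanSpace ℝ (Fin d) =>
        (C p.2 * gaussD d w (p.1 - m p.2) * pY p.2) • p.1) (volume.prod volume) :=
    (aesm_F hw hpYm hCc hmc).smul continuous_fst.aestronglyMeasurable
  rw [integrable_prod_iff' hGm]
  have hnorm : ∀ y, ∀ x1 : EuclideanSpace ℝ (Fin d),
      ‖(C y * gaussD d w (x1 - m y) * pY y) • x1‖
        = (C y * pY y) * (gaussD d w (x1 - m y) * ‖x1‖) := by
    intro y x1
    rw [norm_smul, Real.norm_eq_abs, abs_of_nonneg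
      (mul_nonneg (mul_nonneg (hC0 y) (gaussD_nonneg hw _)) (hpY0 y))]
    ring
  have hIy : ∀ y, ∫ x1, ‖(C y * gaussD d w (x1 - m y) * pY y) • x1‖
      = (C y * pY y) * ∫ x1, gaussD d w (x1 - m y) * ‖x1‖ := by
    intro y
    simp_rw [hnorm y]
    rw [integral_const_mul]
  constructor
  · filter_upwards with y
    have : (fun x1 => (C y * gaussD d w (x1 - m y) * pY y) • x1)
        = fun x1 => (C y * pY y) • (gaussD d w (x1 - m y) • x1) := by
      funext x1; rw [smul_smul]; ring_nf
    rw [this]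
    exact (integrable_gaussD_sub_smul hw (m y)).smul (C y * pY y)
  · apply ((hpYint.mul_const (M * (K + ρ))).mono' (hGm.norm.prod_swap.integral_prod_right'))
    filter_upwards with y
    simp only [Prod.swap_prod_mk]
    rw [Real.norm_eq_abs, abs_of_nonneg (integral_nonneg fun x1 => norm_nonneg _), hIy y]
    by_cases h : pY y = 0
    · simp [h]
    · have hint_le := integral_gaussD_sub_norm_le hw (m y)
      have h2 : ∫ x1, gaussD d w (x1 - m y) * ‖x1‖ ≤ K + ρ :=
        le_trans hint_le (by linarith [hρ y h])
      have h3 : 0 ≤ ∫ x1, gaussD d w (x1 - m y) * ‖x1‖ :=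
        integral_nonneg fun x1 => mul_nonneg (gaussD_nonneg hw _) (norm_nonneg _)
      calc (C y * pY y) * ∫ x1, gaussD d w (x1 - m y) * ‖x1‖
          ≤ (M * pY y) * (K + ρ) := by
            apply mul_le_mul (mul_le_mul_of_nonneg_right (hM y h) (hpY0 y)) h2 h3
            exact mul_nonneg hMp (hpY0 y)
        _ = pY y * (M * (K + ρ)) := by ring

lemma fubini_vector (hw : 0 < w) (hpYm : Measurable pY) (hpY0 : ∀ y, 0 ≤ pY y)
    (hpYint : Integrable pY) (hCc : Continuous C) (hC0 : ∀ y, 0 ≤ C y) (hmc : Continuous m)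
    (hM : ∀ y, pY y ≠ 0 → C y ≤ M) (hρ : ∀ y, pY y ≠ 0 → ‖m y‖ ≤ ρ) (hMp : 0 ≤ M) :
    ∫ x1, ∫ y, (C y * gaussD d w (x1 - m y) * pY y) • x1
      = ∫ y, (pY y * C y) • m y := by
  rw [integral_integral_swap (integrable_G hw hpYm hpY0 hpYint hCc hC0 hmc hM hρ hMp)]
  congr 1
  funext y
  have h1 : (fun x1 => (C y * gaussD d w (x1 - m y) * pY y) • x1)
      = fun x1 => (pY y * C y) • (gaussD d w (x1 - m y) • x1) := by
    funext x1; rw [smul_smul]; ring_nf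
  rw [h1, integral_smul, integral_gaussD_sub_smul hw]

end Fubini

lemma arith1 {s : ℝ} (hs : 0 < s) : (1:ℝ) ≤ (s+1)^2/s := by
  rw [le_div_iff₀ hs]; nlinarith
lemma arith2 {s : ℝ} (hs : 0 < s) : (s+1)/s ≤ (s+1)^2/s := by
  rw [div_le_div_iff₀ hs hs]
  nlinarith [mul_nonneg (mul_nonneg hs.le hs.le) (by linarith : (0:ℝ) ≤ s+1)]
lemma arith3 (A B a r : ℝ) (hA1 : 1 ≤ A) (hBA : B ≤ A) (ha : 0 ≤ a) (hr : 0 ≤ r) :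
    A*a + B*r ≤ (A*(1+r)+1)*(1+a) := by
  nlinarith [mul_nonneg (mul_nonneg (le_trans zero_le_one hA1) hr) ha,
    mul_nonneg ha hr, mul_nonneg (sub_nonneg.mpr hBA) hr,
    mul_nonneg (sub_nonneg.mpr hA1) ha]

set_option maxHeartbeats 1000000 in
/-- Linear growth of the velocity field: if `Y` is supported in `B(0,R)`, `X₁ = Y + σΞ`, and
`u(t,x) = -x/(1-t) + (1/(1-t))E[X₁|X_t=x]`, then `‖u(t,x)‖ ≤ B(1 + ‖x‖)` for a constant `B`
depending only on `σ` and `R`, uniformly in `t ∈ (0,1)`. -/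
theorem stmt_15 (d : ℕ) (σ R : ℝ) (hσ : 0 < σ) (hR : 0 < R)
    (pY : EuclideanSpace ℝ (Fin d) → ℝ) (hpYm : Measurable pY)
    (hpY0 : ∀ y, 0 ≤ pY y) (hpY1 : ∫ y, pY y = 1)
    (hsupp : ∀ y, pY y ≠ 0 → ‖y‖ ≤ R)
    (pX1 : EuclideanSpace ℝ (Fin d) → ℝ)
    (hpX1 : pX1 = fun x1 => ∫ y, gaussD d (σ ^ 2) (x1 - y) * pY y)
    (pt : ℝ → EuclideanSpace ℝ (Fin d) → ℝ)
    (hpt : pt = fun t x => ∫ x1, gaussD d ((1 - t) ^ 2) (x - t • x1) * pX1 x1)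
    (condMean : ℝ → EuclideanSpace ℝ (Fin d) → EuclideanSpace ℝ (Fin d))
    (hcm : condMean = fun t x =>
      (pt t x)⁻¹ • ∫ x1, (gaussD d ((1 - t) ^ 2) (x - t • x1) * pX1 x1) • x1)
    (u : ℝ → EuclideanSpace ℝ (Fin d) → EuclideanSpace ℝ (Fin d))
    (hu : u = fun t x => -((1 - t)⁻¹ • x) + (1 - t)⁻¹ • condMean t x) :
    ∃ B : ℝ, 0 < B ∧ ∀ t ∈ Set.Ioo (0 : ℝ) 1, ∀ x,
      ‖u t x‖ ≤ B * (1 + ‖x‖) := by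
  have hσ2 : (0:ℝ) < σ^2 := by positivity
  refine ⟨((σ^2+1)^2/σ^2) * (1+R) + 1, by positivity, ?_⟩
  rintro t ⟨ht0, ht1⟩ x
  have h1t : (0:ℝ) < 1 - t := by linarith
  obtain ⟨v1, hv1def⟩ : ∃ r : ℝ, r = (1-t)^2 := ⟨_, rfl⟩
  have hv1 : 0 < v1 := by rw [hv1def]; positivity
  obtain ⟨D, hDdef⟩ : ∃ r : ℝ, r = σ^2*t^2 + (1-t)^2 := ⟨_, rfl⟩
  have hD : 0 < D := by rw [hDdef]; positivity
  obtain ⟨w, hwdef⟩ : ∃ r : ℝ, r = v1*σ^2/D := ⟨_, rfl⟩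
  have hw : 0 < w := by rw [hwdef]; positivity
  obtain ⟨α, hαdef⟩ : ∃ r : ℝ, r = σ^2*t/D := ⟨_, rfl⟩
  obtain ⟨β, hβdef⟩ : ∃ r : ℝ, r = v1/D := ⟨_, rfl⟩
  have hα : 0 ≤ α := by rw [hαdef]; positivity
  have hβ : 0 < β := by rw [hβdef]; positivity
  obtain ⟨m, hmdef⟩ : ∃ f : EuclideanSpace ℝ (Fin d) → EuclideanSpace ℝ (Fin d),
    f = fun y => α•x + β•y := ⟨_, rfl⟩
  obtain ⟨c0, hc0def⟩ : ∃ r : ℝ, r = (2*Real.pi*v1)^(-(d:ℝ)/2) * (2*Real.pi*σ^2)^(-(d:ℝ)/2)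
    * (2*Real.pi*w)^((d:ℝ)/2) := ⟨_, rfl⟩
  have hc0 : 0 < c0 := by rw [hc0def]; positivity
  obtain ⟨C, hCdef⟩ : ∃ f : EuclideanSpace ℝ (Fin d) → ℝ,
    f = fun y => c0 * rexp (-(‖x‖^2/v1 + ‖y‖^2/σ^2 - ‖m y‖^2/w)/2) := ⟨_, rfl⟩
  have hC0' : ∀ y, 0 < C y := fun y => by simp only [hCdef]; positivity
  have hC0 : ∀ y, 0 ≤ C y := fun y => (hC0' y).le
  have hquad : t^2/v1 + 1/σ^2 = 1/w := by
    rw [hwdef, hv1def, hDdef]; field_simp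
  have hkey : ∀ x1 y, gaussD d v1 (x - t•x1) * gaussD d (σ^2) (x1-y)
      = C y * gaussD d w (x1 - m y) := by
    intro x1 y
    have hmy : m y = (w*t/v1) • x + (w/σ^2) • y := by
      simp only [hmdef]
      have h1 : w*t/v1 = α := by rw [hwdef, hαdef]; field_simp
      have h2 : w/σ^2 = β := by rw [hwdef, hβdef]; field_simp
      rw [h1, h2]
    simp only [hCdef, hc0def]
    exact gaussD_mul hv1 hσ2 hw t hquad x y x1 (m y) hmy
  -- bounds on C and m on the support of pY
  obtain ⟨ρ, hρdef⟩ : ∃ r : ℝ, r = α*‖x‖ + β*R := ⟨_, rfl⟩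
  have hρ0 : 0 ≤ ρ := by rw [hρdef]; positivity
  obtain ⟨M, hMdef⟩ : ∃ r : ℝ, r = c0 * rexp (ρ^2/(2*w)) := ⟨_, rfl⟩
  have hM0 : 0 ≤ M := by rw [hMdef]; positivity
  have hρy : ∀ y, pY y ≠ 0 → ‖m y‖ ≤ ρ := by
    intro y hy
    rw [hρdef]
    simp only [hmdef]
    calc ‖α•x + β•y‖ ≤ ‖α•x‖ + ‖β•y‖ := norm_add_le _ _
      _ = α*‖x‖ + β*‖y‖ := by
          rw [norm_smul, norm_smul, Real.norm_eq_abs, Real.norm_eq_abs,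
            abs_of_nonneg hα, abs_of_nonneg hβ.le]
      _ ≤ α*‖x‖ + β*R := by
          have := hsupp y hy
          gcongr
  have hMy : ∀ y, pY y ≠ 0 → C y ≤ M := by
    intro y hy
    simp only [hCdef, hMdef]
    apply mul_le_mul_of_nonneg_left _ hc0.le
    apply Real.exp_le_exp.2
    have h1 : ‖m y‖^2 ≤ ρ^2 := pow_le_pow_left₀ (norm_nonneg _) (hρy y hy) 2
    have h2 : ‖m y‖^2/w ≤ ρ^2/w := by gcongr
    have h3 : 0 ≤ ‖x‖^2/v1 := by positivity
    have h4 : 0 ≤ ‖y‖^2/σ^2 := by positivity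
    calc -(‖x‖^2/v1 + ‖y‖^2/σ^2 - ‖m y‖^2/w)/2 ≤ (‖m y‖^2/w)/2 := by linarith
      _ ≤ (ρ^2/w)/2 := by linarith
      _ = ρ^2/(2*w) := by ring
  have hmc : Continuous m := by
    rw [hmdef]
    exact continuous_const.add (continuous_id.const_smul β)
  have hCc : Continuous C := by
    rw [hCdef]
    exact continuous_const.mul (Real.continuous_exp.comp
      ((((continuous_const.add ((continuous_norm.pow 2).div_const (σ^2))).sub
        ((hmc.norm.pow 2).div_const w)).neg).div_const 2))
  have hpYint : Integrable pY := integrable_of_integral_eq_one hpY1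
  have IpYC : Integrable (fun y => pY y * C y) :=
    integrable_pYC hw hpYm hpY0 hpYint hCc hC0 hMy
  -- pt rewrite
  have hinner : ∀ x1, gaussD d v1 (x - t•x1) * pX1 x1
      = ∫ y, C y * gaussD d w (x1 - m y) * pY y := by
    intro x1
    rw [hpX1]
    simp only
    rw [← integral_const_mul]
    congr 1
    funext y
    rw [← mul_assoc, hkey x1 y]
  have hptx : pt t x = ∫ y, pY y * C y := by
    rw [hpt]
    simp only
    rw [← hv1def]
    rw [show (fun x1 => gaussD d v1 (x - t • x1) * pX1 x1)
      = fun x1 => ∫ y, C y * gaussD d w (x1 - m y) * pY y from funext hinner]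
    exact fubini_scalar hw hpYm hpY0 hpYint hCc hC0 hmc hMy
  have hnum : (∫ x1, (gaussD d ((1-t)^2) (x - t•x1) * pX1 x1) • x1)
      = ∫ y, (pY y * C y) • m y := by
    rw [← hv1def]
    rw [show (fun x1 => (gaussD d v1 (x - t • x1) * pX1 x1) • x1)
      = fun x1 => ∫ y, (C y * gaussD d w (x1 - m y) * pY y) • x1 from funext fun x1 => by
        rw [hinner x1, integral_smul_const]]
    exact fubini_vector hw hpYm hpY0 hpYint hCc hC0 hmc hMy hρy hM0
  -- positivity of pt
  obtain ⟨P, hPdef⟩ : ∃ r : ℝ, r = ∫ y, pY y * C y := ⟨_, rfl⟩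
  have hPnn : 0 ≤ P := hPdef ▸ integral_nonneg fun y => mul_nonneg (hpY0 y) (hC0 y)
  have hPpos : 0 < P := by
    rcases hPnn.lt_or_eq with h | h
    · exact h
    · exfalso
      rw [hPdef] at h
      have hz := (integral_eq_zero_iff_of_nonneg
        (fun y => mul_nonneg (hpY0 y) (hC0 y)) IpYC).mp h.symm
      have hpYz : pY =ᵐ[volume] 0 := by
        filter_upwards [hz] with y hy
        have : pY y * C y = 0 := hy
        exact (mul_eq_zero.mp this).resolve_right (hC0' y).ne'
      have h10 : (1:ℝ) = 0 := by
        rw [← hpY1, integral_congr_ae hpYz]; simp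
      exact one_ne_zero h10
  -- the y-average
  obtain ⟨J, hJdef⟩ : ∃ z : EuclideanSpace ℝ (Fin d), z = ∫ y, (pY y * C y) • y := ⟨_, rfl⟩
  have IpYCy : Integrable (fun y => (pY y * C y) • y) := by
    apply (hpYint.mul_const (M*R)).mono'
      ((hpYm.aestronglyMeasurable.mul hCc.aestronglyMeasurable).smul
        aestronglyMeasurable_id)
    filter_upwards with y
    show ‖(pY y * C y) • y‖ ≤ pY y * (M*R)
    rw [norm_smul, Real.norm_eq_abs, abs_of_nonneg (mul_nonneg (hpY0 y) (hC0 y))]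
    by_cases hy : pY y = 0
    · simp [hy]
    · calc pY y * C y * ‖y‖ ≤ (pY y * M) * R :=
            mul_le_mul (mul_le_mul_of_nonneg_left (hMy y hy) (hpY0 y)) (hsupp y hy)
              (norm_nonneg y) (mul_nonneg (hpY0 y) hM0)
        _ = pY y * (M*R) := by ring
  have hJle : ‖J‖ ≤ R * P := by
    rw [hJdef, hPdef]
    calc ‖∫ y, (pY y * C y) • y‖ ≤ ∫ y, ‖(pY y * C y) • y‖ :=
          norm_integral_le_integral_norm _
      _ ≤ ∫ y, R * (pY y * C y) := by
          apply integral_mono IpYCy.norm (IpYC.const_mul R)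
          intro y
          show ‖(pY y * C y) • y‖ ≤ R * (pY y * C y)
          rw [norm_smul, Real.norm_eq_abs, abs_of_nonneg (mul_nonneg (hpY0 y) (hC0 y))]
          by_cases hy : pY y = 0
          · simp [hy]
          · calc pY y * C y * ‖y‖ ≤ pY y * C y * R :=
                mul_le_mul_of_nonneg_left (hsupp y hy) (mul_nonneg (hpY0 y) (hC0 y))
              _ = R * (pY y * C y) := by ring
      _ = R * ∫ y, pY y * C y := integral_const_mul R _
  -- split the numerator integral
  have hsplit : (∫ y, (pY y * C y) • m y) = (α * P) • x + β • J := by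
    rw [show (fun y => (pY y * C y) • m y)
      = fun y => ((pY y * C y) * α) • x + β • ((pY y * C y) • y) from funext fun y => by
        simp only [hmdef]
        module]
    have hIβ : Integrable (fun y => β • ((pY y * C y) • y)) := IpYCy.smul β
    rw [integral_add ((IpYC.mul_const α).smul_const x) hIβ]
    rw [integral_smul_const, integral_mul_const, integral_smul, ← hPdef, ← hJdef,
      mul_comm P α]
  -- assemble u
  have hcm2 : condMean t x = α • x + (P⁻¹*β) • J := by
    rw [hcm]
    simp only
    rw [hnum, hsplit, hptx, ← hPdef]
    have hPα : P⁻¹ * (α * P) = α := by field_simp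
    rw [smul_add, smul_smul, smul_smul, hPα]
  have hu2 : u t x = ((1-t)⁻¹*(α-1)) • x + ((1-t)⁻¹*(P⁻¹*β)) • J := by
    rw [hu]
    simp only
    rw [hcm2, smul_add, smul_smul, smul_smul]
    rw [show -((1-t)⁻¹ • x) + (((1-t)⁻¹*α) • x + ((1-t)⁻¹*(P⁻¹*β)) • J)
      = ((1-t)⁻¹*α - (1-t)⁻¹) • x + ((1-t)⁻¹*(P⁻¹*β)) • J from by
        rw [sub_smul]; abel]
    congr 2
    ring
  -- scalar bounds
  have hc1 : |(1-t)⁻¹*(α-1)| ≤ (σ^2+1)^2/σ^2 := by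
    have heq : (1-t)⁻¹*(α-1) = (σ^2*t - (1-t))/D := by
      rw [hαdef]
      rw [show D = σ^2*t^2 + (1-t)^2 from hDdef]
      field_simp
      ring
    rw [heq, abs_div, abs_of_pos hD]
    have h1 : |σ^2*t - (1-t)| ≤ σ^2+1 := by
      rw [abs_le]
      constructor <;> nlinarith
    calc |σ^2*t - (1-t)|/D ≤ (σ^2+1)/D := by gcongr
      _ ≤ (σ^2+1)^2/σ^2 := by
          rw [div_le_div_iff₀ hD hσ2, hDdef]
          nlinarith [sq_nonneg (σ^2*t - (1-t))]
  have hc2 : (1-t)⁻¹*β ≤ (σ^2+1)/σ^2 := by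
    have heq : (1-t)⁻¹*β = (1-t)/D := by
      rw [hβdef, hv1def]
      field_simp
    rw [heq, div_le_div_iff₀ hD hσ2, hDdef]
    nlinarith [sq_nonneg (σ^2*t - (1-t))]
  have hc2nn : 0 ≤ (1-t)⁻¹*β := mul_nonneg (inv_nonneg.mpr h1t.le) hβ.le
  -- final estimate
  have hJP : ((1-t)⁻¹*(P⁻¹*β)) * ‖J‖ ≤ ((1-t)⁻¹*β) * R := by
    calc ((1-t)⁻¹*(P⁻¹*β)) * ‖J‖ ≤ ((1-t)⁻¹*(P⁻¹*β)) * (R*P) := by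
          apply mul_le_mul_of_nonneg_left hJle
            (mul_nonneg (inv_nonneg.mpr h1t.le) (mul_nonneg (inv_nonneg.mpr hPnn) hβ.le))
      _ = ((1-t)⁻¹*β) * R := by field_simp
  calc ‖u t x‖ ≤ ‖((1-t)⁻¹*(α-1)) • x‖ + ‖((1-t)⁻¹*(P⁻¹*β)) • J‖ := by
        rw [hu2]; exact norm_add_le _ _
    _ = |(1-t)⁻¹*(α-1)| * ‖x‖ + |(1-t)⁻¹*(P⁻¹*β)| * ‖J‖ := by
        rw [norm_smul, norm_smul, Real.norm_eq_abs, Real.norm_eq_abs]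
    _ ≤ ((σ^2+1)^2/σ^2) * ‖x‖ + ((1-t)⁻¹*β) * R := by
        apply add_le_add
        · exact mul_le_mul_of_nonneg_right hc1 (norm_nonneg x)
        · rw [abs_of_nonneg
            (mul_nonneg (inv_nonneg.mpr h1t.le) (mul_nonneg (inv_nonneg.mpr hPnn) hβ.le))]
          exact hJP
    _ ≤ ((σ^2+1)^2/σ^2) * ‖x‖ + ((σ^2+1)/σ^2) * R := by
        apply add_le_add le_rfl
        exact mul_le_mul_of_nonneg_right hc2 hR.le
    _ ≤ (((σ^2+1)^2/σ^2) * (1+R) + 1) * (1 + ‖x‖) :=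
        arith3 _ _ _ _ (arith1 hσ2) (arith2 hσ2) (norm_nonneg x) hR.le
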